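/- Suppose g : 𝕋 × [0,∞) → ℝ is Lipschitz and for every x the function t ↦ g(x,t) is differentiable on [0,∞). For each t, let x₊(t) be a point where g(·,t) attains its maximum, and set g₊(t) = g(x₊(t), t). Then g₊ is Lipschitz with the same Lipschitz constant as g, and for almost every t, g₊ is differentiable at t with derivative ∂ₜg(x₊(t), t). -/

import Mathlib

open MeasureTheory
open scoped Real

instance : Fact (0 < 2 * Real.pi) := ⟨by positivity⟩

/-- Rademacher-type lemma for the evolution of the maximum of a Lipschitz function
on the torus: `g₊(t) = g(x₊(t), t)` is Lipschitz with the same constant, and a.e.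
its derivative equals the time-partial derivative of `g` along the maximizer. -/
theorem stmt2 (g : AddCircle (2 * Real.pi) → ℝ → ℝ) (K : NNReal)
    (hLip : LipschitzOnWith K (fun p : AddCircle (2 * Real.pi) × ℝ => g p.1 p.2)
      (Set.univ ×ˢ Set.Ici 0))
    (hdiff : ∀ x : AddCircle (2 * Real.pi), ∀ t ∈ Set.Ici (0 : ℝ),
      DifferentiableWithinAt ℝ (g x) (Set.Ici 0) t)
    (xp : ℝ → AddCircle (2 * Real.pi))
    (hmax : ∀ t ∈ Set.Ici (0 : ℝ), ∀ y, g y t ≤ g (xp t) t) :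
    LipschitzOnWith K (fun t => g (xp t) t) (Set.Ici 0) ∧
    ∀ᵐ t ∂(volume.restrict (Set.Ici (0 : ℝ))),
      HasDerivWithinAt (fun s => g (xp s) s)
        (derivWithin (g (xp t)) (Set.Ici 0) t) (Set.Ici 0) t := by
  set gp : ℝ → ℝ := fun t => g (xp t) t with hgp
  -- one-sided Lipschitz estimate
  have key : ∀ s ∈ Set.Ici (0:ℝ), ∀ t ∈ Set.Ici (0:ℝ), gp s - gp t ≤ K * |s - t| := by
    intro s hs t ht
    have h1 : gp t ≥ g (xp s) t := hmax t ht (xp s)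
    have h2 : gp s - g (xp s) t ≤ K * |s - t| := by
      have := hLip.dist_le_mul (xp s, s) (by simp [hs]) (xp s, t) (by simp [ht])
      simp only [Prod.dist_eq, dist_self] at this
      have hd : dist s t = |s - t| := Real.dist_eq s t
      calc gp s - g (xp s) t ≤ dist (g (xp s) s) (g (xp s) t) := by
            rw [Real.dist_eq]; exact le_abs_self _
        _ ≤ K * max 0 (dist s t) := this
        _ = K * |s - t| := by simp [hd, dist_nonneg]
    linarith
  have hLipGp : LipschitzOnWith K gp (Set.Ici 0) := by
    rw [lipschitzOnWith_iff_dist_le_mul]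
    intro s hs t ht
    rw [Real.dist_eq, Real.dist_eq, abs_sub_le_iff]
    constructor
    · exact key s hs t ht
    · have := key t ht s hs
      rwa [abs_sub_comm] at this
  refine ⟨hLipGp, ?_⟩
  have hae := hLipGp.ae_differentiableWithinAt (μ := volume) measurableSet_Ici
  have h0 : ∀ᵐ t ∂(volume.restrict (Set.Ici (0:ℝ))), t ≠ 0 := by
    refine ae_restrict_of_ae ?_
    have : volume ({(0:ℝ)} : Set ℝ) = 0 := Real.volume_singleton
    exact measure_mono_null (fun t ht => by simpa using ht) this
  have hmem : ∀ᵐ t ∂(volume.restrict (Set.Ici (0:ℝ))), t ∈ Set.Ici (0:ℝ) :=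
    ae_restrict_mem measurableSet_Ici
  filter_upwards [hae, h0, hmem] with t hdgp ht0 htI
  have htpos : 0 < t := lt_of_le_of_ne htI (Ne.symm ht0)
  have hnhds : Set.Ici (0:ℝ) ∈ nhds t := Ici_mem_nhds htpos
  -- differentiability at t
  have hgpAt : DifferentiableAt ℝ gp t := hdgp.differentiableAt hnhds
  have hhAt : DifferentiableAt ℝ (g (xp t)) t :=
    (hdiff (xp t) t htI).differentiableAt hnhds
  -- local min of gp - g (xp t) · at t
  have hmin : IsLocalMin (fun s => gp s - g (xp t) s) t := by
    filter_upwards [hnhds] with s hsI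
    have : g (xp t) s ≤ gp s := hmax s hsI (xp t)
    simp only [hgp, sub_self]
    linarith
  have hderiv0 : deriv (fun s => gp s - g (xp t) s) t = 0 := hmin.deriv_eq_zero
  rw [deriv_fun_sub hgpAt hhAt, sub_eq_zero] at hderiv0
  have heq : derivWithin (g (xp t)) (Set.Ici 0) t = deriv (g (xp t)) t :=
    derivWithin_of_mem_nhds hnhds
  rw [heq, ← hderiv0]
  exact hgpAt.hasDerivAt.hasDerivWithinAt
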